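/- Let b∈ℝ and define polynomials c_k(χ), d_k(χ) (with coefficients depending on b) by c₀=1, d₀=0, c₁=0, d₁=1, and for k≥2 by the recurrences c_k(χ)=−χ·c_{k−1}(χ)+(b+k−2)·c_{k−2}(χ)+χ(k−2)·c_{k−3}(χ) and d_k(χ)=−χ·d_{k−1}(χ)+(b+k−2)·d_{k−2}(χ)+χ(k−2)·d_{k−3}(χ) (terms with negative index interpreted as 0). Then for b>0, every integer k≥0 and every χ∈ℝ, S_k(χ) = c_k(χ)·S₀(χ) + d_k(χ)·S₁(χ). -/

import Mathlib

open MeasureTheory Real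

/-- The canonical integrals `S_k(χ) = (1/Γ(b)) ∫₀^∞ τ^{b-1} (τ-χ)^k e^{-(τ-χ)²/2} dτ`. -/
noncomputable def S (b : ℝ) (k : ℕ) (χ : ℝ) : ℝ :=
  (1 / Real.Gamma b) *
    ∫ τ in Set.Ioi (0 : ℝ), τ ^ (b - 1) * (τ - χ) ^ k * Real.exp (-(τ - χ) ^ 2 / 2)

/-- The connection coefficients `c_k(χ)`: `c₀ = 1`, `c₁ = 0`, and for `k ≥ 2`
`c_k(χ) = -χ c_{k-1}(χ) + (b + k - 2) c_{k-2}(χ) + χ (k-2) c_{k-3}(χ)`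
(terms with negative index interpreted as `0`). -/
noncomputable def ccoef (b : ℝ) : ℕ → ℝ → ℝ
  | 0 => fun _ => 1
  | 1 => fun _ => 0
  | 2 => fun χ => -χ * ccoef b 1 χ + b * ccoef b 0 χ
  | (k + 3) => fun χ =>
      -χ * ccoef b (k + 2) χ + (b + (k + 3) - 2) * ccoef b (k + 1) χ
        + χ * ((k + 3 : ℝ) - 2) * ccoef b k χ

/-- The connection coefficients `d_k(χ)`: `d₀ = 0`, `d₁ = 1`, and for `k ≥ 2`
`d_k(χ) = -χ d_{k-1}(χ) + (b + k - 2) d_{k-2}(χ) + χ (k-2) d_{k-3}(χ)`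
(terms with negative index interpreted as `0`). -/
noncomputable def dcoef (b : ℝ) : ℕ → ℝ → ℝ
  | 0 => fun _ => 0
  | 1 => fun _ => 1
  | 2 => fun χ => -χ * dcoef b 1 χ + b * dcoef b 0 χ
  | (k + 3) => fun χ =>
      -χ * dcoef b (k + 2) χ + (b + (k + 3) - 2) * dcoef b (k + 1) χ
        + χ * ((k + 3 : ℝ) - 2) * dcoef b k χ

noncomputable def II (b : ℝ) (k : ℕ) (χ : ℝ) : ℝ :=
  ∫ τ in Set.Ioi (0 : ℝ), τ ^ (b - 1) * (τ - χ) ^ k * Real.exp (-(τ - χ) ^ 2 / 2)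

open Set Filter Topology

lemma S_eq (b : ℝ) (k : ℕ) (χ : ℝ) : S b k χ = (1 / Real.Gamma b) * II b k χ := rfl

lemma aux_bound (k : ℕ) (x : ℝ) : |x| ^ k * Real.exp (-x ^ 2 / 4) ≤ (Nat.factorial k : ℝ) * Real.exp 1 := by
  have hk : (0:ℝ) < (Nat.factorial k : ℝ) := by exact_mod_cast Nat.factorial_pos k
  have h1 : |x| ^ k ≤ (Nat.factorial k : ℝ) * Real.exp |x| := by
    have := Real.pow_div_factorial_le_exp |x| (abs_nonneg x) k
    calc |x| ^ k = (|x| ^ k / (Nat.factorial k : ℝ)) * (Nat.factorial k : ℝ) := by field_simp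
    _ ≤ Real.exp |x| * (Nat.factorial k : ℝ) := by gcongr
    _ = (Nat.factorial k : ℝ) * Real.exp |x| := by ring
  have h2 : Real.exp |x| * Real.exp (-x ^ 2 / 4) ≤ Real.exp 1 := by
    rw [← Real.exp_add]
    apply Real.exp_le_exp.mpr
    nlinarith [sq_abs x, sq_nonneg (|x| - 2)]
  calc |x| ^ k * Real.exp (-x ^ 2 / 4)
      ≤ ((Nat.factorial k : ℝ) * Real.exp |x|) * Real.exp (-x ^ 2 / 4) := by
        gcongr
    _ = (Nat.factorial k : ℝ) * (Real.exp |x| * Real.exp (-x ^ 2 / 4)) := by ring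
    _ ≤ (Nat.factorial k : ℝ) * Real.exp 1 := by gcongr

lemma poly_exp_bound (k : ℕ) (χ τ : ℝ) :
    |τ - χ| ^ k * Real.exp (-(τ - χ) ^ 2 / 2) ≤
      ((Nat.factorial k : ℝ) * Real.exp 1 * Real.exp (χ ^ 2 / 4)) * Real.exp (-τ ^ 2 / 8) := by
  have h1 := aux_bound k (τ - χ)
  have h2 : Real.exp (-(τ - χ) ^ 2 / 4) ≤ Real.exp (χ ^ 2 / 4) * Real.exp (-τ ^ 2 / 8) := by
    rw [← Real.exp_add]
    exact Real.exp_le_exp.mpr (by nlinarith [sq_nonneg (τ - 2 * χ)])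
  calc |τ - χ| ^ k * Real.exp (-(τ - χ) ^ 2 / 2)
      = (|τ - χ| ^ k * Real.exp (-(τ - χ) ^ 2 / 4)) * Real.exp (-(τ - χ) ^ 2 / 4) := by
        rw [mul_assoc, ← Real.exp_add]; congr 2; ring
    _ ≤ ((Nat.factorial k : ℝ) * Real.exp 1) * (Real.exp (χ ^ 2 / 4) * Real.exp (-τ ^ 2 / 8)) :=
        mul_le_mul h1 h2 (Real.exp_pos _).le (by positivity)
    _ = _ := by ring

lemma g_meas (b χ : ℝ) (k : ℕ) :
    ContinuousOn (fun τ : ℝ => τ ^ (b - 1) * (τ - χ) ^ k * Real.exp (-(τ - χ) ^ 2 / 2))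
      (Set.Ioi 0) := by
  apply ContinuousOn.mul
  apply ContinuousOn.mul
  · exact fun x hx =>
      (Real.continuousAt_rpow_const x (b - 1) (Or.inl (ne_of_gt hx))).continuousWithinAt
  · exact ((continuous_id.sub continuous_const).pow k).continuousOn
  · exact (Real.continuous_exp.comp
      (((continuous_id.sub continuous_const).pow 2).neg.div_const 2)).continuousOn

lemma g_int (b : ℝ) (hb : 0 < b) (χ : ℝ) (k : ℕ) :
    IntegrableOn (fun τ : ℝ => τ ^ (b - 1) * (τ - χ) ^ k * Real.exp (-(τ - χ) ^ 2 / 2))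
      (Set.Ioi 0) := by
  have hint : IntegrableOn (fun τ : ℝ =>
      ((Nat.factorial k : ℝ) * Real.exp 1 * Real.exp (χ ^ 2 / 4)) * (τ ^ (b - 1) * Real.exp (-(1/8 : ℝ) * τ ^ 2)))
      (Set.Ioi 0) :=
    (integrableOn_rpow_mul_exp_neg_mul_sq (by norm_num : (0:ℝ) < 1/8)
      (by linarith : (-1:ℝ) < b - 1)).const_mul _
  apply hint.mono' ((g_meas b χ k).aestronglyMeasurable measurableSet_Ioi)
  filter_upwards [ae_restrict_mem measurableSet_Ioi] with τ hτ
  have hτ0 : (0:ℝ) < τ := hτ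
  have hrp : (0:ℝ) ≤ τ ^ (b - 1) := Real.rpow_nonneg hτ0.le _
  have hb1 := poly_exp_bound k χ τ
  have : ‖τ ^ (b - 1) * (τ - χ) ^ k * Real.exp (-(τ - χ) ^ 2 / 2)‖ =
      τ ^ (b - 1) * (|τ - χ| ^ k * Real.exp (-(τ - χ) ^ 2 / 2)) := by
    rw [Real.norm_eq_abs, abs_mul, abs_mul, abs_of_nonneg hrp,
      abs_of_nonneg (Real.exp_pos _).le, abs_pow, mul_assoc]
  rw [this]
  calc τ ^ (b - 1) * (|τ - χ| ^ k * Real.exp (-(τ - χ) ^ 2 / 2))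
      ≤ τ ^ (b - 1) * (((Nat.factorial k : ℝ) * Real.exp 1 * Real.exp (χ ^ 2 / 4)) * Real.exp (-τ ^ 2 / 8)) := by
        gcongr
    _ = ((Nat.factorial k : ℝ) * Real.exp 1 * Real.exp (χ ^ 2 / 4)) * (τ ^ (b - 1) * Real.exp (-(1/8 : ℝ) * τ ^ 2)) := by
        rw [show -τ ^ 2 / 8 = -(1/8 : ℝ) * τ ^ 2 by ring]; ring

lemma f_tendsto (b : ℝ) (χ : ℝ) (k : ℕ) :
    Tendsto (fun τ : ℝ => τ ^ b * (τ - χ) ^ k * Real.exp (-(τ - χ) ^ 2 / 2)) atTop (𝓝 0) := by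
  have hg : Tendsto (fun τ : ℝ =>
      ((Nat.factorial k : ℝ) * Real.exp 1 * Real.exp (χ ^ 2 / 4)) * (τ ^ b * Real.exp (-(1/4 : ℝ) * τ))) atTop (𝓝 0) := by
    have := (tendsto_rpow_mul_exp_neg_mul_atTop_nhds_zero b (1/4) (by norm_num)).const_mul
      ((Nat.factorial k : ℝ) * Real.exp 1 * Real.exp (χ ^ 2 / 4))
    simpa using this
  apply squeeze_zero_norm' _ hg
  filter_upwards [eventually_ge_atTop (2:ℝ)] with τ hτ
  have hτ0 : (0:ℝ) < τ := by linarith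
  have hrp : (0:ℝ) ≤ τ ^ b := Real.rpow_nonneg hτ0.le _
  have h1 := poly_exp_bound k χ τ
  have h2 : Real.exp (-τ ^ 2 / 8) ≤ Real.exp (-(1/4 : ℝ) * τ) :=
    Real.exp_le_exp.mpr (by nlinarith)
  have : ‖τ ^ b * (τ - χ) ^ k * Real.exp (-(τ - χ) ^ 2 / 2)‖ =
      τ ^ b * (|τ - χ| ^ k * Real.exp (-(τ - χ) ^ 2 / 2)) := by
    rw [Real.norm_eq_abs, abs_mul, abs_mul, abs_of_nonneg hrp,
      abs_of_nonneg (Real.exp_pos _).le, abs_pow, mul_assoc]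
  rw [this]
  calc τ ^ b * (|τ - χ| ^ k * Real.exp (-(τ - χ) ^ 2 / 2))
      ≤ τ ^ b * (((Nat.factorial k : ℝ) * Real.exp 1 * Real.exp (χ ^ 2 / 4)) * Real.exp (-τ ^ 2 / 8)) := by gcongr
    _ ≤ τ ^ b * (((Nat.factorial k : ℝ) * Real.exp 1 * Real.exp (χ ^ 2 / 4)) * Real.exp (-(1/4:ℝ) * τ)) := by
        gcongr
    _ = ((Nat.factorial k : ℝ) * Real.exp 1 * Real.exp (χ ^ 2 / 4)) * (τ ^ b * Real.exp (-(1/4 : ℝ) * τ)) := by ring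

lemma f_hasDeriv (b : ℝ) (χ : ℝ) (k : ℕ) {τ : ℝ} (hτ : 0 < τ) :
    HasDerivAt (fun τ : ℝ => τ ^ b * (τ - χ) ^ k * Real.exp (-(τ - χ) ^ 2 / 2))
      ((b * τ ^ (b - 1) * (τ - χ) ^ k +
        τ ^ b * ((k : ℝ) * (τ - χ) ^ (k - 1) * 1)) * Real.exp (-(τ - χ) ^ 2 / 2) +
        τ ^ b * (τ - χ) ^ k * (Real.exp (-(τ - χ) ^ 2 / 2) * (-(τ - χ)))) τ := by
  have h1 : HasDerivAt (fun τ : ℝ => τ ^ b) (b * τ ^ (b - 1)) τ := by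
    simpa [mul_comm] using Real.hasDerivAt_rpow_const (p := b) (Or.inl hτ.ne')
  have h2 : HasDerivAt (fun τ : ℝ => (τ - χ) ^ k) ((k : ℝ) * (τ - χ) ^ (k - 1) * 1) τ :=
    ((hasDerivAt_id τ).sub_const χ).pow k
  have h3 : HasDerivAt (fun τ : ℝ => -(τ - χ) ^ 2 / 2) (-(τ - χ)) τ := by
    have := (((hasDerivAt_id τ).sub_const χ).pow 2).neg.div_const 2
    refine this.congr_deriv ?_
    simp only [id_eq]
    push_cast
    ring
  have h4 : HasDerivAt (fun τ : ℝ => Real.exp (-(τ - χ) ^ 2 / 2))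
      (Real.exp (-(τ - χ) ^ 2 / 2) * (-(τ - χ))) τ := h3.exp
  exact (h1.mul h2).mul h4

/-- Key integration-by-parts recurrence. -/
lemma key (b : ℝ) (hb : 0 < b) (χ : ℝ) (k : ℕ) :
    II b (k + 2) χ = -χ * II b (k + 1) χ + (b + k) * II b k χ + χ * k * II b (k - 1) χ := by
  set g : ℕ → ℝ → ℝ := fun m τ => τ ^ (b - 1) * (τ - χ) ^ m * Real.exp (-(τ - χ) ^ 2 / 2) with hg
  have hgint : ∀ m, IntegrableOn (g m) (Set.Ioi 0) := fun m => g_int b hb χ m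
  set G : ℝ → ℝ := fun τ =>
    (b + k) * g k τ + (χ * k) * g (k - 1) τ - g (k + 2) τ - χ * g (k + 1) τ with hG
  have hGint : IntegrableOn G (Set.Ioi 0) := by
    exact ((((hgint k).const_mul _).add ((hgint (k-1)).const_mul _)).sub (hgint (k+2))).sub
      ((hgint (k+1)).const_mul χ)
  have hcont : ContinuousWithinAt
      (fun τ : ℝ => τ ^ b * (τ - χ) ^ k * Real.exp (-(τ - χ) ^ 2 / 2)) (Set.Ici 0) 0 := by
    apply ContinuousWithinAt.mul
    apply ContinuousWithinAt.mul
    · exact (Real.continuousAt_rpow_const 0 b (Or.inr hb.le)).continuousWithinAt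
    · exact (((continuous_id.sub continuous_const).pow k)).continuousWithinAt
    · exact (Real.continuous_exp.comp
        (((continuous_id.sub continuous_const).pow 2).neg.div_const 2)).continuousWithinAt
  have hderiv : ∀ τ ∈ Set.Ioi (0:ℝ), HasDerivAt
      (fun τ : ℝ => τ ^ b * (τ - χ) ^ k * Real.exp (-(τ - χ) ^ 2 / 2)) (G τ) τ := by
    intro τ hτ
    have hτ0 : (0:ℝ) < τ := hτ
    have hd := f_hasDeriv b χ k hτ0
    convert hd using 1
    have hτb : τ ^ b = τ ^ (b - 1) * τ := by
      rw [← Real.rpow_add_one hτ0.ne' (b - 1)]; norm_num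
    simp only [hG, hg]
    rw [hτb]
    obtain _ | j := k
    · norm_num
      ring
    · simp only [Nat.add_sub_cancel]
      push_cast
      ring
  have hIBP := integral_Ioi_of_hasDerivAt_of_tendsto hcont hderiv hGint (f_tendsto b χ k)
  rw [Real.zero_rpow hb.ne', zero_mul, zero_mul, zero_sub, neg_zero] at hIBP
  have hI1 : IntegrableOn (fun τ : ℝ => (b + (k:ℝ)) * g k τ) (Ioi 0) := (hgint k).const_mul _
  have hI2 : IntegrableOn (fun τ : ℝ => (χ * (k:ℝ)) * g (k - 1) τ) (Ioi 0) :=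
    (hgint (k-1)).const_mul _
  have hI12 : IntegrableOn (fun τ : ℝ => (b + (k:ℝ)) * g k τ + (χ * (k:ℝ)) * g (k - 1) τ)
      (Ioi 0) := hI1.add hI2
  have hI123 : IntegrableOn
      (fun τ : ℝ => (b + (k:ℝ)) * g k τ + (χ * (k:ℝ)) * g (k - 1) τ - g (k + 2) τ)
      (Ioi 0) := hI12.sub (hgint (k+2))
  have hI4 : IntegrableOn (fun τ : ℝ => χ * g (k + 1) τ) (Ioi 0) := (hgint (k+1)).const_mul _
  have hsplit : ∫ τ in Set.Ioi (0:ℝ), G τ =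
      (b + k) * II b k χ + (χ * k) * II b (k - 1) χ - II b (k + 2) χ - χ * II b (k + 1) χ := by
    simp only [hG]
    rw [integral_sub hI123 hI4, integral_sub hI12 (hgint (k+2)), integral_add hI1 hI2,
      integral_const_mul, integral_const_mul, integral_const_mul]
    rfl
  rw [hsplit] at hIBP
  linarith


/-- `S_k(χ) = c_k(χ) S₀(χ) + d_k(χ) S₁(χ)` for all `k ≥ 0`. -/
theorem S_connection (b : ℝ) (hb : 0 < b) (k : ℕ) (χ : ℝ) :
    S b k χ = ccoef b k χ * S b 0 χ + dcoef b k χ * S b 1 χ := by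
  have hSrec : ∀ m : ℕ, S b (m + 2) χ =
      -χ * S b (m + 1) χ + (b + m) * S b m χ + χ * m * S b (m - 1) χ := by
    intro m
    simp only [S_eq, key b hb χ m]
    ring
  induction k using Nat.strong_induction_on with
  | _ k ih =>
    match k with
    | 0 => simp [ccoef, dcoef]
    | 1 => simp [ccoef, dcoef]
    | 2 =>
      have := hSrec 0
      simp only [Nat.cast_zero] at this
      rw [show (0:ℕ)+2 = 2 from rfl] at this
      rw [this]
      simp [ccoef, dcoef]
      ring
    | (j + 3) =>
      have h := hSrec (j + 1)
      have e1 : j + 1 + 2 = j + 3 := by omega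
      have e2 : j + 1 + 1 = j + 2 := by omega
      have e3 : j + 1 - 1 = j := by omega
      rw [e1, e2, e3] at h
      rw [h, ih (j+2) (by omega), ih (j+1) (by omega), ih j (by omega)]
      simp only [ccoef, dcoef]
      push_cast
      ring
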